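/- (Conjugation criterion via kernels.) Let μ and δ be matrix differential operators with coefficients in M_N(ℂ[[x]]), and suppose there exists a matrix differential operator ν with coefficients in M_N(ℂ[[x]]) such that νμ is monic. Then there exists a matrix differential operator η with coefficients in M_N(ℂ[[x]]) such that δμ = μη (equivalently, μ⁻¹δμ is a matrix differential operator) if and only if ker(μ)·δ ⊆ ker(μ), i.e., ψ·δ ∈ ker(μ) for every ψ ∈ ker(μ). -/

import Mathlib

open Matrix PowerSeries

/-- `N×N` complex matrices. -/
abbrev Mat (N : ℕ) := Matrix (Fin N) (Fin N) ℂ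

/-- `N×N` matrices of formal power series. -/
abbrev MatPS (N : ℕ) := Matrix (Fin N) (Fin N) (PowerSeries ℂ)

/-- Entrywise formal differentiation of a matrix of power series. -/
noncomputable def psmatD {N : ℕ} (f : MatPS N) : MatPS N :=
  f.map fun g => PowerSeries.derivativeFun g

/-- Right action of the matrix differential operator `∑ ∂ⁱ aᵢ` (orders `0,…,r`) with
power-series coefficients on a matrix of power series: `f ↦ ∑ f⁽ⁱ⁾ aᵢ`. -/
noncomputable def actPS {N : ℕ} (a : ℕ → MatPS N) (r : ℕ) (f : MatPS N) : MatPS N :=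
  ∑ i ∈ Finset.range (r + 1), (psmatD)^[i] f * a i

/-- Embed a constant matrix into matrices of power series. -/
noncomputable def constPS {N : ℕ} (c : Mat N) : MatPS N :=
  c.map fun z => PowerSeries.C (R := ℂ) z

open Finset

namespace ConjAux
variable {N : ℕ}

/-- entrywise coefficient extraction -/
noncomputable def cf (n : ℕ) (f : MatPS N) : Mat N := f.map (PowerSeries.coeff (R := ℂ) n)

lemma cf_apply (n : ℕ) (f : MatPS N) (i j : Fin N) : cf n f i j = PowerSeries.coeff (R := ℂ) n (f i j) := rfl

lemma cf_add (n : ℕ) (f g : MatPS N) : cf n (f + g) = cf n f + cf n g := by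
  ext i j; simp [cf_apply, Matrix.add_apply]

lemma cf_sum {α : Type*} (n : ℕ) (s : Finset α) (F : α → MatPS N) :
    cf n (∑ x ∈ s, F x) = ∑ x ∈ s, cf n (F x) := by
  ext i j
  simp [cf_apply, Matrix.sum_apply]

lemma cf_zero (n : ℕ) : cf n (0 : MatPS N) = 0 := by
  ext i j; simp [cf_apply, Matrix.zero_apply]

lemma cf_smul (n : ℕ) (z : ℂ) (f : MatPS N) : cf n (z • f) = z • cf n f := by
  ext i j; simp [cf_apply, Matrix.smul_apply]

lemma matps_ext {f g : MatPS N} (h : ∀ n, cf n f = cf n g) : f = g := by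
  ext i j n
  have := congrFun (congrFun (h n) i) j
  simpa [cf_apply] using this

lemma cf_mul (n : ℕ) (f g : MatPS N) :
    cf n (f * g) = ∑ u ∈ range (n + 1), cf u f * cf (n - u) g := by
  ext i j
  rw [cf_apply, Matrix.mul_apply, Matrix.sum_apply, map_sum]
  have h1 : ∀ k : Fin N, (PowerSeries.coeff (R := ℂ) n) (f i k * g k j)
      = ∑ u ∈ range (n + 1), (PowerSeries.coeff (R := ℂ) u) (f i k) * (PowerSeries.coeff (R := ℂ) (n - u)) (g k j) := by
    intro k
    rw [PowerSeries.coeff_mul, Finset.Nat.sum_antidiagonal_eq_sum_range_succ_mk]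
  simp_rw [h1]
  rw [Finset.sum_comm]
  refine Finset.sum_congr rfl fun u _ => ?_
  simp [Matrix.mul_apply, cf_apply]

lemma cf_one (n : ℕ) : cf n (1 : MatPS N) = if n = 0 then 1 else 0 := by
  ext i j
  by_cases h : n = 0 <;>
  · by_cases hij : i = j <;>
      simp [cf_apply, Matrix.one_apply, h, hij, PowerSeries.coeff_one, Matrix.zero_apply]


lemma psmatD_apply (f : MatPS N) (i j : Fin N) : psmatD f i j = d⁄dX ℂ (f i j) := rfl

lemma psmatD_add (f g : MatPS N) : psmatD (f + g) = psmatD f + psmatD g := by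
  refine Matrix.ext fun i j => ?_
  simp only [psmatD_apply, Matrix.add_apply, map_add]

lemma psmatD_zero : psmatD (0 : MatPS N) = 0 := by
  refine Matrix.ext fun i j => ?_
  simp only [psmatD_apply, Matrix.zero_apply, map_zero]

lemma psmatD_sum {α : Type*} (s : Finset α) (F : α → MatPS N) :
    psmatD (∑ x ∈ s, F x) = ∑ x ∈ s, psmatD (F x) := by
  classical
  induction s using Finset.induction_on with
  | empty => simpa using psmatD_zero
  | insert _ _ h ih => rw [Finset.sum_insert h, Finset.sum_insert h, psmatD_add, ih]

lemma psmatD_nsmul (k : ℕ) (f : MatPS N) : psmatD (k • f) = k • psmatD f := by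
  induction k with
  | zero => simpa using psmatD_zero
  | succ k ih => rw [succ_nsmul, succ_nsmul, psmatD_add, ih]

lemma psmatD_mul (f g : MatPS N) : psmatD (f * g) = psmatD f * g + f * psmatD g := by
  refine Matrix.ext fun i j => ?_
  simp only [psmatD_apply, Matrix.add_apply, Matrix.mul_apply]
  rw [map_sum, ← Finset.sum_add_distrib]
  refine Finset.sum_congr rfl fun k _ => ?_
  have : d⁄dX ℂ (f i k * g k j) = derivativeFun (f i k * g k j) := rfl
  rw [this, derivativeFun_mul]
  simp only [smul_eq_mul, psmatD_apply]
  show f i k * derivativeFun (g k j) + g k j * derivativeFun (f i k)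
      = derivativeFun (f i k) * g k j + f i k * derivativeFun (g k j)
  ring

lemma iterD_add (k : ℕ) (f g : MatPS N) : psmatD^[k] (f + g) = psmatD^[k] f + psmatD^[k] g := by
  induction k generalizing f g with
  | zero => simp
  | succ k ih => simp only [Function.iterate_succ_apply, psmatD_add, ih]

lemma iterD_zero (k : ℕ) : psmatD^[k] (0 : MatPS N) = 0 := by
  induction k with
  | zero => simp
  | succ k ih => simp only [Function.iterate_succ_apply, psmatD_zero, ih]

lemma iterD_sub (k : ℕ) (f g : MatPS N) : psmatD^[k] (f - g) = psmatD^[k] f - psmatD^[k] g := by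
  have h := iterD_add k (f - g) g
  rw [sub_add_cancel] at h
  rw [h]; abel

lemma iterD_sum {α : Type*} (k : ℕ) (s : Finset α) (F : α → MatPS N) :
    psmatD^[k] (∑ x ∈ s, F x) = ∑ x ∈ s, psmatD^[k] (F x) := by
  induction k with
  | zero => simp
  | succ k ih => simp only [Function.iterate_succ_apply', ih, psmatD_sum]

lemma iterD_nsmul (k n : ℕ) (f : MatPS N) : psmatD^[k] (n • f) = n • psmatD^[k] f := by
  induction k with
  | zero => simp
  | succ k ih => simp only [Function.iterate_succ_apply', ih, psmatD_nsmul]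

lemma iterD_mul (k : ℕ) (f g : MatPS N) :
    psmatD^[k] (f * g) =
      ∑ j ∈ range (k + 1), k.choose j • (psmatD^[j] f * psmatD^[k - j] g) := by
  induction k with
  | zero => simp
  | succ n IH =>
    have step1 : psmatD^[n + 1] (f * g) =
        (∑ j ∈ range (n + 1), n.choose j • (psmatD^[j + 1] f * psmatD^[n - j] g)) +
        ∑ j ∈ range (n + 1), n.choose j • (psmatD^[j] f * psmatD^[n - j + 1] g) := by
      rw [Function.iterate_succ_apply', IH, psmatD_sum, ← Finset.sum_add_distrib]
      refine Finset.sum_congr rfl fun j _ => ?_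
      rw [psmatD_nsmul, psmatD_mul, smul_add, Function.iterate_succ_apply',
        Function.iterate_succ_apply']
    have hA : ∑ j ∈ range (n + 1), n.choose j • (psmatD^[j] f * psmatD^[n - j + 1] g)
        = (∑ k ∈ range n, n.choose (k + 1) • (psmatD^[k + 1] f * psmatD^[n - (k + 1) + 1] g)) +
          f * psmatD^[n + 1] g := by
      rw [Finset.sum_range_succ' (fun j => n.choose j • (psmatD^[j] f * psmatD^[n - j + 1] g)) n]
      simp
    have hB : ∑ j ∈ range (n + 1), n.choose j • (psmatD^[j + 1] f * psmatD^[n - j] g)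
        = (∑ j ∈ range n, n.choose j • (psmatD^[j + 1] f * psmatD^[n - j] g)) +
          psmatD^[n + 1] f * g := by
      rw [Finset.sum_range_succ]
      simp
    have hC : ∑ j ∈ range (n + 1 + 1), (n + 1).choose j • (psmatD^[j] f * psmatD^[n + 1 - j] g)
        = ((∑ j ∈ range n, (n + 1).choose (j + 1) • (psmatD^[j + 1] f * psmatD^[n - j] g)) +
            psmatD^[n + 1] f * g) + f * psmatD^[n + 1] g := by
      rw [Finset.sum_range_succ' (fun j => (n + 1).choose j • (psmatD^[j] f * psmatD^[n + 1 - j] g)) (n + 1)]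
      rw [Finset.sum_range_succ (fun j => (n + 1).choose (j + 1) • (psmatD^[j + 1] f * psmatD^[n + 1 - (j + 1)] g)) n]
      simp only [Nat.choose_zero_right, Nat.choose_self, Nat.sub_zero, one_smul,
        Function.iterate_zero_apply, Nat.succ_sub_succ, Nat.sub_self]
    have hP : ∀ j ∈ range n,
        n.choose j • (psmatD^[j + 1] f * psmatD^[n - j] g) +
          n.choose (j + 1) • (psmatD^[j + 1] f * psmatD^[n - (j + 1) + 1] g)
        = (n + 1).choose (j + 1) • (psmatD^[j + 1] f * psmatD^[n - j] g) := by
      intro j hj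
      rw [Finset.mem_range] at hj
      have h1 : n - (j + 1) + 1 = n - j := by omega
      rw [h1, ← add_smul, ← Nat.choose_succ_succ]
    rw [step1, hA, hB, hC, add_add_add_comm, ← Finset.sum_add_distrib,
      Finset.sum_congr rfl hP]
    abel


lemma cf_psmatD (n : ℕ) (f : MatPS N) : cf n (psmatD f) = ((n : ℂ) + 1) • cf (n + 1) f := by
  ext i j
  simp only [cf_apply, psmatD_apply, Matrix.smul_apply, coeff_derivative, smul_eq_mul]
  ring

lemma cf_iterD (k n : ℕ) (f : MatPS N) :
    cf n (psmatD^[k] f) = ((n + k).descFactorial k : ℂ) • cf (n + k) f := by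
  induction k generalizing n with
  | zero => simp
  | succ k ih =>
    rw [Function.iterate_succ_apply', cf_psmatD, ih (n + 1), smul_smul]
    have h1 : n + 1 + k = n + (k + 1) := by omega
    rw [h1]
    congr 1
    have h2 : (n + (k + 1)).descFactorial (k + 1) = (n + 1) * (n + (k + 1)).descFactorial k := by
      rw [Nat.descFactorial_succ]
      congr 1
      omega
    rw [h2]
    push_cast
    ring

lemma actPS_zero_f (a : ℕ → MatPS N) (r : ℕ) : actPS a r (0 : MatPS N) = 0 := by
  simp [actPS, iterD_zero]

lemma actPS_add_f (a : ℕ → MatPS N) (r : ℕ) (f g : MatPS N) :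
    actPS a r (f + g) = actPS a r f + actPS a r g := by
  simp [actPS, iterD_add, add_mul, Finset.sum_add_distrib]

lemma actPS_sub_f (a : ℕ → MatPS N) (r : ℕ) (f g : MatPS N) :
    actPS a r (f - g) = actPS a r f - actPS a r g := by
  simp [actPS, iterD_sub, sub_mul, Finset.sum_sub_distrib]

lemma actPS_coef_add (u w : ℕ → MatPS N) (r : ℕ) (f : MatPS N) :
    actPS (fun i => u i + w i) r f = actPS u r f + actPS w r f := by
  simp [actPS, mul_add, Finset.sum_add_distrib]

lemma actPS_congr_coef {u w : ℕ → MatPS N} {r : ℕ} (h : ∀ i, i ≤ r → u i = w i) (f : MatPS N) :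
    actPS u r f = actPS w r f := by
  refine Finset.sum_congr rfl fun i hi => ?_
  rw [Finset.mem_range] at hi
  rw [h i (by omega)]

lemma actPS_pad {u : ℕ → MatPS N} {r r' : ℕ} (h : r ≤ r') (hz : ∀ i, r < i → u i = 0)
    (f : MatPS N) : actPS u r' f = actPS u r f := by
  rw [actPS, actPS]
  refine (Finset.sum_subset ?_ ?_).symm
  · exact Finset.range_subset_range.mpr (by omega)
  · intro i hi hni
    rw [Finset.mem_range] at hi
    rw [Finset.mem_range] at hni
    rw [hz i (by omega), mul_zero]

lemma cf_actPS (a : ℕ → MatPS N) (r : ℕ) (f : MatPS N) (n : ℕ) :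
    cf n (actPS a r f) = ∑ i ∈ range (r + 1), ∑ u ∈ range (n + 1),
      ((u + i).descFactorial i : ℂ) • (cf (u + i) f * cf (n - u) (a i)) := by
  rw [actPS, cf_sum]
  refine Finset.sum_congr rfl fun i _ => ?_
  rw [cf_mul]
  refine Finset.sum_congr rfl fun u _ => ?_
  rw [cf_iterD, smul_mul_assoc]

/-- Coefficients of the composite operator: apply `(a,r)` first, then `(b,s)`. -/
noncomputable def compCoef (a : ℕ → MatPS N) (r : ℕ) (b : ℕ → MatPS N) (s : ℕ) :
    ℕ → MatPS N := fun k =>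
  ∑ i ∈ range (s + 1), ∑ j ∈ range (r + 1), ∑ l ∈ range (i + 1),
    if j + l = k then i.choose l • (psmatD^[i - l] (a j) * b i) else 0

lemma actPS_comp (a : ℕ → MatPS N) (r : ℕ) (b : ℕ → MatPS N) (s : ℕ) (f : MatPS N) :
    actPS b s (actPS a r f) = actPS (compCoef a r b s) (r + s) f := by
  have hT : actPS b s (actPS a r f) = ∑ i ∈ range (s + 1), ∑ j ∈ range (r + 1),
      ∑ l ∈ range (i + 1), i.choose l • (psmatD^[j + l] f * (psmatD^[i - l] (a j) * b i)) := by
    rw [actPS, actPS]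
    refine Finset.sum_congr rfl fun i _ => ?_
    rw [iterD_sum, Finset.sum_mul]
    refine Finset.sum_congr rfl fun j _ => ?_
    rw [iterD_mul, Finset.sum_mul]
    refine Finset.sum_congr rfl fun l _ => ?_
    rw [smul_mul_assoc, mul_assoc]
    congr 2
    rw [add_comm j l, Function.iterate_add_apply]
  rw [hT, actPS]
  have hexp : ∀ k, psmatD^[k] f * compCoef a r b s k
      = ∑ i ∈ range (s + 1), ∑ j ∈ range (r + 1), ∑ l ∈ range (i + 1),
          if j + l = k then i.choose l • (psmatD^[k] f * (psmatD^[i - l] (a j) * b i)) else 0 := by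
    intro k
    rw [compCoef, Finset.mul_sum]
    refine Finset.sum_congr rfl fun i _ => ?_
    rw [Finset.mul_sum]
    refine Finset.sum_congr rfl fun j _ => ?_
    rw [Finset.mul_sum]
    refine Finset.sum_congr rfl fun l _ => ?_
    rw [mul_ite, mul_zero, mul_smul_comm]
  simp_rw [hexp]
  set F : ℕ → ℕ → ℕ → ℕ → MatPS N := fun i j l k =>
    if j + l = k then i.choose l • (psmatD^[k] f * (psmatD^[i - l] (a j) * b i)) else 0 with hF
  calc ∑ i ∈ range (s + 1), ∑ j ∈ range (r + 1), ∑ l ∈ range (i + 1),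
        i.choose l • (psmatD^[j + l] f * (psmatD^[i - l] (a j) * b i))
      = ∑ i ∈ range (s + 1), ∑ j ∈ range (r + 1), ∑ l ∈ range (i + 1),
          ∑ k ∈ range (r + s + 1), F i j l k := by
        refine Finset.sum_congr rfl fun i hi => Finset.sum_congr rfl fun j hj =>
          Finset.sum_congr rfl fun l hl => ?_
        rw [Finset.mem_range] at hi hj hl
        rw [hF]
        rw [Finset.sum_ite_eq (range (r + s + 1)) (j + l)
          (fun k => i.choose l • (psmatD^[k] f * (psmatD^[i - l] (a j) * b i)))]
        rw [if_pos (Finset.mem_range.mpr (by omega))]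
    _ = ∑ i ∈ range (s + 1), ∑ j ∈ range (r + 1), ∑ k ∈ range (r + s + 1),
          ∑ l ∈ range (i + 1), F i j l k := by
        refine Finset.sum_congr rfl fun i _ => Finset.sum_congr rfl fun j _ => ?_
        exact Finset.sum_comm
    _ = ∑ i ∈ range (s + 1), ∑ k ∈ range (r + s + 1), ∑ j ∈ range (r + 1),
          ∑ l ∈ range (i + 1), F i j l k := by
        refine Finset.sum_congr rfl fun i _ => ?_
        exact Finset.sum_comm
    _ = ∑ k ∈ range (r + s + 1), ∑ i ∈ range (s + 1), ∑ j ∈ range (r + 1),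
          ∑ l ∈ range (i + 1), F i j l k := Finset.sum_comm



/-- Division with remainder by a monic operator (monic on the left of the composite). -/
lemma division (e : ℕ → MatPS N) (m : ℕ) (he : e m = 1) :
    ∀ n (p : ℕ → MatPS N), ∃ q ρ : ℕ → MatPS N, (∀ i, m ≤ i → ρ i = 0) ∧
      ∀ f, actPS p n f = actPS q n (actPS e m f) + actPS ρ n f := by
  intro n
  induction n using Nat.strong_induction_on with
  | _ n IH =>
    intro p
    by_cases hm0 : m = 0
    · -- E f = f
      subst hm0
      refine ⟨p, fun _ => 0, fun i _ => rfl, fun f => ?_⟩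
      have hE : actPS e 0 f = f := by
        rw [actPS]
        simp [he]
      rw [hE]
      simp [actPS]
    · by_cases hnm : n < m
      · refine ⟨fun _ => 0, fun i => if i < m then p i else 0, fun i hi => by
          simp [Nat.not_lt.mpr hi], fun f => ?_⟩
        have h1 : actPS (fun _ => (0 : MatPS N)) n (actPS e m f) = 0 := by
          simp [actPS]
        rw [h1, zero_add]
        refine Finset.sum_congr rfl fun i hi => ?_
        rw [Finset.mem_range] at hi
        exact congrArg (psmatD^[i] f * ·) (if_pos (by omega)).symm
      · -- m ≤ n, 1 ≤ m, so 1 ≤ n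
        push_neg at hnm
        set k := n - m with hk
        set bb : ℕ → MatPS N := fun i => if i = k then p n else 0 with hbb
        set G : ℕ → MatPS N := compCoef e m bb k with hG
        have hmk : m + k = n := by omega
        have hcomp : ∀ f, actPS G (m + k) f = actPS bb k (actPS e m f) :=
          fun f => (actPS_comp e m bb k f).symm
        have hGn : G n = p n := by
          rw [hG, compCoef]
          have hsplit : ∀ i ∈ range (k + 1), ∀ j ∈ range (m + 1), ∀ l ∈ range (i + 1),
              (if j + l = n then i.choose l • (psmatD^[i - l] (e j) * bb i) else 0)
              = if i = k ∧ j = m ∧ l = k then p n else 0 := by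
            intro i hi j hj l hl
            rw [Finset.mem_range] at hi hj hl
            by_cases hc : i = k ∧ j = m ∧ l = k
            · obtain ⟨hik, hjm, hlk⟩ := hc
              subst hik; subst hjm; subst hlk
              rw [if_pos (by omega), if_pos ⟨rfl, rfl, rfl⟩, hbb]
              simp [he]
            · rw [if_neg ?_, if_neg hc]
              intro hjl
              -- j + l = n with j ≤ m, l ≤ i ≤ k forces j = m, l = k, and then i = k
              have hjm : j = m := by omega
              have hlk : l = k := by omega
              have hik : i = k := by omega
              exact hc ⟨hik, hjm, hlk⟩
          rw [Finset.sum_congr rfl (fun i hi => Finset.sum_congr rfl (fun j hj =>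
            Finset.sum_congr rfl (fun l hl => hsplit i hi j hj l hl)))]
          rw [Finset.sum_eq_single_of_mem k (Finset.self_mem_range_succ k)
            (fun i _ hik => Finset.sum_eq_zero fun j _ => Finset.sum_eq_zero fun l _ =>
              if_neg (fun hc => hik hc.1))]
          rw [Finset.sum_eq_single_of_mem m (Finset.self_mem_range_succ m)
            (fun j _ hjm => Finset.sum_eq_zero fun l _ => if_neg (fun hc => hjm hc.2.1))]
          rw [Finset.sum_eq_single_of_mem k (Finset.self_mem_range_succ k)
            (fun l _ hlk => if_neg (fun hc => hlk hc.2.2))]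
          simp
        set p' : ℕ → MatPS N := fun i => if i ≤ n - 1 then p i - G i else 0 with hp'
        have hstep : ∀ f, actPS p n f = actPS G n f + actPS p' (n - 1) f := by
          intro f
          have h2 : actPS p n f - actPS G n f = actPS p' (n - 1) f := by
            rw [actPS, actPS, ← Finset.sum_sub_distrib]
            have h3 : ∀ i, psmatD^[i] f * p i - psmatD^[i] f * G i
                = psmatD^[i] f * (p i - G i) := fun i => (mul_sub _ _ _).symm
            rw [Finset.sum_congr rfl fun i _ => h3 i]
            have hn1 : n = (n - 1) + 1 := by omega
            rw [hn1, Finset.sum_range_succ]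
            have htop : p ((n-1)+1) - G ((n-1)+1) = 0 := by
              rw [← hn1, hGn]; simp
            rw [htop, mul_zero, add_zero, actPS]
            refine Finset.sum_congr rfl fun i hi => ?_
            rw [Finset.mem_range] at hi
            exact congrArg (psmatD^[i] f * ·) (if_pos (by omega)).symm
          rw [← h2]; abel
        obtain ⟨q', ρ', hρ', hdiv'⟩ := IH (n - 1) (by omega) p'
        refine ⟨fun i => bb i + (if i ≤ n - 1 then q' i else 0),
          fun i => if i ≤ n - 1 then ρ' i else 0, fun i hi => ?_, fun f => ?_⟩
        · by_cases hle : i ≤ n - 1 <;> simp [hle, hρ' i hi]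
        · rw [hstep f, hdiv' f]
          rw [actPS_coef_add bb (fun i => if i ≤ n - 1 then q' i else 0) n (actPS e m f)]
          have hbbpad : actPS bb n (actPS e m f) = actPS bb k (actPS e m f) := by
            exact actPS_pad (by omega) (fun i hi => if_neg (by omega)) _
          have hq'pad : actPS (fun i => if i ≤ n - 1 then q' i else 0) n (actPS e m f)
              = actPS q' (n - 1) (actPS e m f) := by
            rw [actPS_pad (show n - 1 ≤ n by omega) (fun i hi => if_neg (by omega)) _]
            exact actPS_congr_coef (fun i hi => if_pos hi) _
          have hρpad : actPS (fun i => if i ≤ n - 1 then ρ' i else 0) n f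
              = actPS ρ' (n - 1) f := by
            rw [actPS_pad (show n - 1 ≤ n by omega) (fun i hi => if_neg (by omega)) _]
            exact actPS_congr_coef (fun i hi => if_pos hi) _
          rw [hbbpad, hq'pad, hρpad, ← hcomp, hmk]
          abel



/-- Coefficients of a power-series solution `f` of `f·E = g` with prescribed initial data. -/
noncomputable def solCoef {N : ℕ} (m : ℕ) (e : ℕ → MatPS N) (g : MatPS N) (v : ℕ → Mat N) :
    ℕ → Mat N
  | k =>
    if k < m then v k
    else
      ((k.descFactorial m : ℂ))⁻¹ •
        (cf (k - m) g - ∑ i ∈ (Finset.range m).attach, ∑ j ∈ (Finset.range (k - m + 1)).attach,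
          (((j : ℕ) + (i : ℕ)).descFactorial (i : ℕ) : ℂ) •
            (solCoef m e g v ((j : ℕ) + (i : ℕ)) * cf (k - m - (j : ℕ)) (e (i : ℕ))))
  termination_by k => k
  decreasing_by
    rename_i h
    have hi := i.2
    have hj := j.2
    rw [Finset.mem_range] at hi hj
    omega

variable {N : ℕ}

lemma solve (m : ℕ) (e : ℕ → MatPS N) (he : e m = 1) (g : MatPS N) (v : ℕ → Mat N) :
    ∃ f : MatPS N, actPS e m f = g ∧ ∀ j, j < m → cf j f = v j := by
  classical
  set F : ℕ → Mat N := solCoef m e g v with hFdef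
  set f : MatPS N := Matrix.of (fun i j => PowerSeries.mk fun k => F k i j) with hfdef
  have hcf : ∀ n, cf n f = F n := by
    intro n
    ext i j
    simp [cf_apply, hfdef, PowerSeries.coeff_mk]
  refine ⟨f, ?_, fun j hj => by rw [hcf, hFdef, solCoef, if_pos hj]⟩
  apply matps_ext
  intro n
  rw [cf_actPS, Finset.sum_range_succ]
  -- the top term
  have htop : ∑ u ∈ Finset.range (n + 1),
      ((u + m).descFactorial m : ℂ) • (cf (u + m) f * cf (n - u) (e m))
      = ((n + m).descFactorial m : ℂ) • cf (n + m) f := by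
    rw [Finset.sum_eq_single_of_mem n (Finset.self_mem_range_succ n) ?h0]
    · rw [he, cf_one, Nat.sub_self, if_pos rfl, mul_one]
    · intro u hu hun
      rw [Finset.mem_range] at hu
      rw [he, cf_one, if_neg (by omega), mul_zero, smul_zero]
  rw [htop, hcf]
  have hne : ((n + m).descFactorial m : ℂ) ≠ 0 := by
    have h0 : (n + m).descFactorial m ≠ 0 := by
      intro hz
      have := Nat.descFactorial_eq_zero_iff_lt.mp hz
      omega
    exact_mod_cast h0
  have hFtop : F (n + m) = ((n + m).descFactorial m : ℂ)⁻¹ •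
      (cf n g - ∑ i ∈ (Finset.range m).attach, ∑ j ∈ (Finset.range (n + 1)).attach,
        (((j : ℕ) + (i : ℕ)).descFactorial (i : ℕ) : ℂ) •
          (F ((j : ℕ) + (i : ℕ)) * cf (n - (j : ℕ)) (e (i : ℕ)))) := by
    rw [hFdef, solCoef, if_neg (by omega)]
    rw [Nat.add_sub_cancel]
  rw [hFtop, smul_smul, mul_inv_cancel₀ hne, one_smul]
  have hS : ∑ i ∈ Finset.range m, ∑ u ∈ Finset.range (n + 1),
      ((u + i).descFactorial i : ℂ) • (cf (u + i) f * cf (n - u) (e i))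
      = ∑ i ∈ (Finset.range m).attach, ∑ j ∈ (Finset.range (n + 1)).attach,
        (((j : ℕ) + (i : ℕ)).descFactorial (i : ℕ) : ℂ) •
          (F ((j : ℕ) + (i : ℕ)) * cf (n - (j : ℕ)) (e (i : ℕ))) := by
    rw [Finset.sum_attach (Finset.range m) (fun i => ∑ j ∈ (Finset.range (n + 1)).attach,
      ((( j : ℕ) + i).descFactorial i : ℂ) • (F ((j : ℕ) + i) * cf (n - (j : ℕ)) (e i)))]
    refine Finset.sum_congr rfl fun i _ => ?_
    rw [Finset.sum_attach (Finset.range (n + 1)) (fun j =>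
      ((j + i).descFactorial i : ℂ) • (F (j + i) * cf (n - j) (e i)))]
    refine Finset.sum_congr rfl fun u _ => ?_
    rw [hcf]
  rw [hS]
  abel



lemma rem_zero (m : ℕ) (e : ℕ → MatPS N) (he : e m = 1) (n' : ℕ) (ρ : ℕ → MatPS N)
    (hρ : ∀ i, m ≤ i → ρ i = 0)
    (hker : ∀ f, actPS e m f = 0 → actPS ρ n' f = 0) :
    ∀ i, i ≤ n' → ρ i = 0 := by
  have claim : ∀ u, ∀ i, i ≤ n' → cf u (ρ i) = 0 := by
    intro u
    induction u using Nat.strong_induction_on with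
    | _ u IH =>
      intro i0 hi0
      by_cases him : m ≤ i0
      · rw [hρ i0 him, cf_zero]
      · push_neg at him
        obtain ⟨f, hf, hjet⟩ := solve m e he 0 (fun j => if j = i0 then 1 else 0)
        have h0 := hker f hf
        have hc := congrArg (cf u) h0
        rw [cf_actPS, cf_zero] at hc
        have hinner : ∀ i ∈ Finset.range (n' + 1),
            (∑ w ∈ Finset.range (u + 1),
              ((w + i).descFactorial i : ℂ) • (cf (w + i) f * cf (u - w) (ρ i)))
            = ((i).descFactorial i : ℂ) • (cf i f * cf u (ρ i)) := by
          intro i hi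
          rw [Finset.mem_range] at hi
          rw [Finset.sum_eq_single_of_mem 0 (Finset.mem_range.mpr (by omega))
            (fun w hw hw0 => ?_)]
          · rw [Nat.zero_add, Nat.sub_zero]
          · rw [Finset.mem_range] at hw
            rw [IH (u - w) (by omega) i (by omega), mul_zero, smul_zero]
        rw [Finset.sum_congr rfl hinner] at hc
        have houter : ∀ i ∈ Finset.range (n' + 1), i ≠ i0 →
            ((i).descFactorial i : ℂ) • (cf i f * cf u (ρ i)) = 0 := by
          intro i hi hii0
          by_cases him2 : m ≤ i
          · rw [hρ i him2, cf_zero, mul_zero, smul_zero]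
          · push_neg at him2
            rw [hjet i him2, if_neg hii0, zero_mul, smul_zero]
        rw [Finset.sum_eq_single_of_mem i0 (Finset.mem_range.mpr (by omega)) houter] at hc
        rw [hjet i0 him, if_pos rfl, one_mul] at hc
        have hfac : ((i0).descFactorial i0 : ℂ) ≠ 0 := by
          have h0' : (i0).descFactorial i0 ≠ 0 := by
            intro hz
            have := Nat.descFactorial_eq_zero_iff_lt.mp hz
            omega
          exact_mod_cast h0'
        rcases smul_eq_zero.mp hc with h | h
        · exact absurd h hfac
        · exact h
  intro i hi
  apply matps_ext
  intro u
  rw [claim u i hi, cf_zero]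


end ConjAux

/-- **Conjugation criterion via kernels.**  Let `μ = (a,r)` and `δ = (b,s)` be matrix
differential operators over `M_N(ℂ[[x]])` and suppose `νμ` is monic for some operator
`ν = (c,t)`.  Then `δμ = μη` for some matrix differential operator `η` (equivalently,
`μ⁻¹δμ` is a matrix differential operator) if and only if `ker(μ)·δ ⊆ ker(μ)`. -/
theorem conjugation_iff_kernel_invariant {N : ℕ} (r s t : ℕ)
    (a b c : ℕ → MatPS N)
    -- νμ is monic, i.e. p·(νμ) = (p·ν)·μ is given by a monic operator:
    (hmonic : ∃ (m : ℕ) (e : ℕ → MatPS N), e m = 1 ∧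
      ∀ f : MatPS N, actPS e m f = actPS a r (actPS c t f)) :
    (∃ (t' : ℕ) (d : ℕ → MatPS N),
        ∀ f : MatPS N, actPS a r (actPS b s f) = actPS d t' (actPS a r f)) ↔
      ∀ ψ : MatPS N, actPS a r ψ = 0 → actPS a r (actPS b s ψ) = 0 := by
  constructor
  · rintro ⟨t', d, hd⟩ ψ hψ
    rw [hd ψ, hψ, ConjAux.actPS_zero_f]
  · intro hker
    obtain ⟨m, e, he, hE⟩ := hmonic
    set cd := ConjAux.compCoef c t b s with hcd
    have h1 : ∀ f, actPS b s (actPS c t f) = actPS cd (t + s) f :=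
      fun f => ConjAux.actPS_comp c t b s f
    set p := ConjAux.compCoef cd (t + s) a r with hp
    have h2 : ∀ f, actPS a r (actPS cd (t + s) f) = actPS p (t + s + r) f :=
      fun f => ConjAux.actPS_comp cd (t + s) a r f
    obtain ⟨q, ρ, hρ, hdiv⟩ := ConjAux.division e m he (t + s + r) p
    have hρ0 : ∀ f, actPS e m f = 0 → actPS ρ (t + s + r) f = 0 := by
      intro f hf
      have hx : actPS a r (actPS c t f) = 0 := by rw [← hE]; exact hf
      have hMP := hker _ hx
      rw [h1, h2] at hMP
      have hq0 : actPS q (t + s + r) (actPS e m f) = 0 := by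
        rw [hf, ConjAux.actPS_zero_f]
      have hdf := hdiv f
      rw [hMP, hq0, zero_add] at hdf
      exact hdf.symm
    have hρz := ConjAux.rem_zero m e he (t + s + r) ρ hρ hρ0
    have hrem0 : ∀ f, actPS ρ (t + s + r) f = 0 := by
      intro f
      rw [actPS]
      refine Finset.sum_eq_zero fun i hi => ?_
      rw [Finset.mem_range] at hi
      rw [hρz i (by omega), mul_zero]
    refine ⟨t + s + r, q, fun h => ?_⟩
    obtain ⟨f, hf, -⟩ := ConjAux.solve m e he (actPS a r h) 0
    have hψ : actPS a r (h - actPS c t f) = 0 := by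
      rw [ConjAux.actPS_sub_f, ← hE, hf, sub_self]
    have hkψ := hker _ hψ
    rw [ConjAux.actPS_sub_f b s, ConjAux.actPS_sub_f a r] at hkψ
    have heq : actPS a r (actPS b s h) = actPS a r (actPS b s (actPS c t f)) :=
      sub_eq_zero.mp hkψ
    rw [heq, h1, h2, hdiv f, hrem0 f, add_zero, hf]
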